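/- Let μ be a non-atomic Radon measure on ℝ and let D be a μ-adic grid on a bounded interval I (each interval recursively split into two closed subintervals of equal μ-measure). Let E be the complement in I of the union of all limit sets of positive length of nested chains of the grid. Then μ(E) = μ(I), and for every nonnegative f ∈ L¹(I, μ), f(x) ≤ M^{D} f(x) for μ-almost every x ∈ E, where M^{D} f(x) = sup_{J ∈ D, J ∋ x} (1/μ(J))∫_J |f| dμ. -/

import Mathlib

open MeasureTheory Set
noncomputable section

/-- A nondegenerate bounded closed interval in `ℝ`. -/
def IsBInterval (I : Set ℝ) : Prop := ∃ a b : ℝ, a < b ∧ I = Set.Icc a b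

/-- The average `(1/μ I) ∫_I f dμ`. -/
def iAvg (μ : Measure ℝ) (f : ℝ → ℝ) (I : Set ℝ) : ℝ :=
  (μ I).toReal⁻¹ * ∫ x in I, f x ∂μ

/-- The uncentered Hardy–Littlewood maximal function with respect to `μ`, over
bounded intervals of positive measure containing `x`. -/
def maximal1 (μ : Measure ℝ) (f : ℝ → ℝ) (x : ℝ) : ℝ :=
  ⨆ I : {I : Set ℝ // IsBInterval I ∧ x ∈ I ∧ μ I ≠ 0},
    iAvg μ (fun y => |f y|) I.1

/-- `w` belongs to the Muckenhoupt class `A_p(μ)` on the line with constant (bound) `c`. -/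
def IsAp1 (μ : Measure ℝ) (w : ℝ → ℝ) (p c : ℝ) : Prop :=
  ∀ I : Set ℝ, IsBInterval I → μ I ≠ 0 →
    iAvg μ w I * (iAvg μ (fun x => w x ^ (1 - p / (p - 1))) I) ^ (p - 1) ≤ c

/-- The Fujii–Wilson `A_∞` condition on the line with constant (bound) `c`:
`∫_I M(w χ_I) dμ ≤ c ∫_I w dμ` for all bounded intervals `I`. -/
def IsFW1 (μ : Measure ℝ) (w : ℝ → ℝ) (c : ℝ) : Prop :=
  ∀ I : Set ℝ, IsBInterval I →
    ∫ x in I, maximal1 μ (I.indicator w) x ∂μ ≤ c * ∫ x in I, w x ∂μ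

/-- A μ-adic grid on an interval `I`: each cell is a closed interval, split into two
children of equal μ-measure. Cells are indexed by lists of booleans (the empty list
is `I` itself, and `b :: s` is a child of `s`; generation = length). -/
structure MuAdicGrid (μ : Measure ℝ) (I : Set ℝ) where
  cell : List Bool → Set ℝ
  top : cell [] = I
  isIcc : ∀ s, ∃ a b : ℝ, a ≤ b ∧ cell s = Set.Icc a b
  union : ∀ s, cell (true :: s) ∪ cell (false :: s) = cell s
  halves : ∀ (b : Bool) (s), μ (cell (b :: s)) = μ (cell s) / 2

/-- The dyadic maximal operator associated with a μ-adic grid. -/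
def gridMaximal (μ : Measure ℝ) {I : Set ℝ} (G : MuAdicGrid μ I) (f : ℝ → ℝ) (x : ℝ) : ℝ :=
  ⨆ s : {s : List Bool // x ∈ G.cell s ∧ μ (G.cell s) ≠ 0},
    iAvg μ (fun y => |f y|) (G.cell s.1)

/-- The limit set of the chain determined by a branch `c : ℕ → Bool`
(the `m`-th term of the chain is the cell indexed by the first `m` values of `c`,
most recent choice first). -/
def limitSet (μ : Measure ℝ) {I : Set ℝ} (G : MuAdicGrid μ I) (c : ℕ → Bool) : Set ℝ :=
  ⋂ m : ℕ, G.cell (List.ofFn fun i : Fin m => c (m - 1 - i))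

section Helpers

open scoped ENNReal
open Filter

variable {μ : Measure ℝ} {I : Set ℝ}

lemma cell_cons_subset (G : MuAdicGrid μ I) (b : Bool) (s : List Bool) :
    G.cell (b :: s) ⊆ G.cell s := by
  conv_rhs => rw [← G.union s]
  cases b
  · exact subset_union_right
  · exact subset_union_left

lemma cell_suffix_subset (G : MuAdicGrid μ I) {s t : List Bool} (h : t <:+ s) :
    G.cell s ⊆ G.cell t := by
  obtain ⟨p, rfl⟩ := h
  induction p with
  | nil => simp
  | cons a p ih => exact (cell_cons_subset G a _).trans ih

lemma cell_subset (G : MuAdicGrid μ I) (s : List Bool) : G.cell s ⊆ I := by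
  have := cell_suffix_subset G (List.nil_suffix (l := s))
  rwa [G.top] at this

lemma measurableSet_cell (G : MuAdicGrid μ I) (s : List Bool) : MeasurableSet (G.cell s) := by
  obtain ⟨a, b, -, h⟩ := G.isIcc s
  rw [h]; exact measurableSet_Icc

lemma measure_cell (G : MuAdicGrid μ I) (s : List Bool) :
    μ (G.cell s) = μ I * 2⁻¹ ^ s.length := by
  induction s with
  | nil => simp [G.top]
  | cons b s ih =>
    rw [G.halves, ih, List.length_cons, div_eq_mul_inv, pow_succ, mul_assoc]

lemma measure_cell_le (G : MuAdicGrid μ I) (s : List Bool) : μ (G.cell s) ≤ μ I :=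
  measure_mono (cell_subset G s)

lemma measure_cell_ne_top (G : MuAdicGrid μ I) (hfin : μ I ≠ ⊤) (s : List Bool) :
    μ (G.cell s) ≠ ⊤ :=
  ((measure_cell_le G s).trans_lt hfin.lt_top).ne

lemma measure_inter_sibling (G : MuAdicGrid μ I) (hfin : μ I ≠ ⊤) (s : List Bool) :
    μ (G.cell (true :: s) ∩ G.cell (false :: s)) = 0 := by
  have h := measure_union_add_inter (μ := μ) (G.cell (true :: s)) (measurableSet_cell G (false :: s))
  rw [G.union, G.halves, G.halves, ENNReal.add_halves] at h
  have hfin' : μ (G.cell s) ≠ ⊤ := measure_cell_ne_top G hfin s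
  have h2 : μ (G.cell s) + μ (G.cell (true :: s) ∩ G.cell (false :: s)) = μ (G.cell s) + 0 := by
    rw [add_zero]; exact h
  exact (ENNReal.add_right_inj hfin').mp h2

lemma measure_inter_same_length (G : MuAdicGrid μ I) (hfin : μ I ≠ ⊤) :
    ∀ s t : List Bool, s.length = t.length → s ≠ t → μ (G.cell s ∩ G.cell t) = 0 := by
  intro s
  induction s with
  | nil =>
    intro t h hne
    exact absurd (List.length_eq_zero_iff.mp h.symm).symm hne
  | cons a s ih =>
    intro t hlen hne
    match t with
    | [] => simp at hlen
    | b :: t =>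
      simp only [List.length_cons, Nat.add_right_cancel_iff] at hlen
      by_cases hst : s = t
      · subst hst
        have hab : a ≠ b := fun h => hne (by rw [h])
        cases a <;> cases b
        · exact absurd rfl hab
        · rw [Set.inter_comm]; exact measure_inter_sibling G hfin s
        · exact measure_inter_sibling G hfin s
        · exact absurd rfl hab
      · exact measure_mono_null
          (inter_subset_inter (cell_cons_subset G a s) (cell_cons_subset G b t))
          (ih t hlen hst)

lemma measure_inter_of_not_suffix_aux (G : MuAdicGrid μ I) (hfin : μ I ≠ ⊤) {s t : List Bool}
    (hle : s.length ≤ t.length) (hst : ¬ s <:+ t) : μ (G.cell s ∩ G.cell t) = 0 := by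
  set a := t.drop (t.length - s.length) with ha
  have hsuf : a <:+ t := List.drop_suffix _ _
  have hlen : a.length = s.length := by
    rw [ha, List.length_drop]; omega
  have hne : s ≠ a := fun h => hst (h ▸ hsuf)
  exact measure_mono_null
    (inter_subset_inter_right _ (cell_suffix_subset G hsuf))
    (measure_inter_same_length G hfin s a hlen.symm hne)

lemma measure_inter_of_not_suffix (G : MuAdicGrid μ I) (hfin : μ I ≠ ⊤) {s t : List Bool}
    (hst : ¬ s <:+ t) (hts : ¬ t <:+ s) : μ (G.cell s ∩ G.cell t) = 0 := by
  rcases le_total s.length t.length with hle | hle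
  · exact measure_inter_of_not_suffix_aux G hfin hle hst
  · rw [Set.inter_comm]; exact measure_inter_of_not_suffix_aux G hfin hle hts

lemma exists_maximal (𝒮 : Set (List Bool)) :
    ∃ M ⊆ 𝒮, (∀ s ∈ M, ∀ t ∈ 𝒮, t <:+ s → t = s) ∧
      ∀ s ∈ 𝒮, ∃ m ∈ M, m <:+ s := by
  classical
  refine ⟨{s | s ∈ 𝒮 ∧ ∀ t ∈ 𝒮, t <:+ s → t = s}, fun s hs => hs.1, fun s hs => hs.2, ?_⟩
  have key : ∀ n, ∀ s, s.length ≤ n → s ∈ 𝒮 →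
      ∃ m ∈ {s | s ∈ 𝒮 ∧ ∀ t ∈ 𝒮, t <:+ s → t = s}, m <:+ s := by
    intro n
    induction n with
    | zero =>
      intro s hn hs
      by_cases hmax : ∀ t ∈ 𝒮, t <:+ s → t = s
      · exact ⟨s, ⟨hs, hmax⟩, List.suffix_refl s⟩
      · push_neg at hmax
        obtain ⟨t, ht, hsuf, hne⟩ := hmax
        have := lt_of_le_of_ne hsuf.length_le (fun h => hne (hsuf.eq_of_length h))
        omega
    | succ n ih =>
      intro s hn hs
      by_cases hmax : ∀ t ∈ 𝒮, t <:+ s → t = s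
      · exact ⟨s, ⟨hs, hmax⟩, List.suffix_refl s⟩
      · push_neg at hmax
        obtain ⟨t, ht, hsuf, hne⟩ := hmax
        have hl := lt_of_le_of_ne hsuf.length_le (fun h => hne (hsuf.eq_of_length h))
        obtain ⟨m, hm, hms⟩ := ih t (by omega) ht
        exact ⟨m, hm, hms.trans hsuf⟩
  intro s hs; exact key s.length s le_rfl hs

lemma maximal_pairwise (G : MuAdicGrid μ I) (hfin : μ I ≠ ⊤) {𝒮 M : Set (List Bool)}
    (hM𝒮 : M ⊆ 𝒮) (hmax : ∀ s ∈ M, ∀ t ∈ 𝒮, t <:+ s → t = s) :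
    M.Pairwise (Function.onFun (AEDisjoint μ) G.cell) := by
  intro s hs t ht hne
  have h1 : ¬ s <:+ t := fun h => hne (hmax t ht s (hM𝒮 hs) h)
  have h2 : ¬ t <:+ s := fun h => hne ((hmax s hs t (hM𝒮 ht) h).symm)
  exact measure_inter_of_not_suffix G hfin h1 h2

lemma lintegral_biUnion_cell_le (G : MuAdicGrid μ I) (hfin : μ I ≠ ⊤)
    (F : ℝ → ℝ≥0∞) (c : ℝ≥0∞) (𝒮 : Set (List Bool))
    (hb : ∀ s ∈ 𝒮, ∫⁻ x in G.cell s, F x ∂μ ≤ c * μ (G.cell s))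
    (V : Set ℝ) (hV : ∀ s ∈ 𝒮, G.cell s ⊆ V) :
    ∫⁻ x in ⋃ s ∈ 𝒮, G.cell s, F x ∂μ ≤ c * μ V := by
  obtain ⟨M, hM𝒮, hMmax, hMcover⟩ := exists_maximal 𝒮
  have hMc : M.Countable := M.to_countable
  haveI := hMc.to_subtype
  have hpair : M.Pairwise (Function.onFun (AEDisjoint μ) G.cell) := maximal_pairwise G hfin hM𝒮 hMmax
  have hsub : (⋃ s ∈ 𝒮, G.cell s) ⊆ ⋃ s ∈ M, G.cell s := by
    intro x hx
    obtain ⟨s, hs, hx⟩ := Set.mem_iUnion₂.mp hx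
    obtain ⟨m, hm, hms⟩ := hMcover s hs
    exact Set.mem_iUnion₂.mpr ⟨m, hm, cell_suffix_subset G hms hx⟩
  calc ∫⁻ x in ⋃ s ∈ 𝒮, G.cell s, F x ∂μ
      ≤ ∫⁻ x in ⋃ s ∈ M, G.cell s, F x ∂μ :=
        lintegral_mono' (Measure.restrict_mono hsub le_rfl) le_rfl
    _ = ∫⁻ x in ⋃ s : M, G.cell s, F x ∂μ := by rw [Set.biUnion_eq_iUnion]
    _ ≤ ∑' s : M, ∫⁻ x in G.cell s, F x ∂μ := lintegral_iUnion_le _ _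
    _ ≤ ∑' s : M, c * μ (G.cell s) := ENNReal.tsum_le_tsum fun s => hb s (hM𝒮 s.2)
    _ = c * ∑' s : M, μ (G.cell s) := ENNReal.tsum_mul_left
    _ = c * μ (⋃ s ∈ M, G.cell s) := by
        rw [measure_biUnion₀ hMc hpair (fun s _ => (measurableSet_cell G s).nullMeasurableSet)]
    _ ≤ c * μ V := mul_le_mul_right (measure_mono (by
        simp only [iUnion_subset_iff]; exact fun s hs => hV s (hM𝒮 hs))) c

lemma measure_biUnion_cell_le (G : MuAdicGrid μ I) (hfin : μ I ≠ ⊤)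
    (F : ℝ → ℝ≥0∞) (c : ℝ≥0∞) (𝒮 : Set (List Bool))
    (hb : ∀ s ∈ 𝒮, μ (G.cell s) ≤ c * ∫⁻ x in G.cell s, F x ∂μ) :
    μ (⋃ s ∈ 𝒮, G.cell s) ≤ c * ∫⁻ x in I, F x ∂μ := by
  obtain ⟨M, hM𝒮, hMmax, hMcover⟩ := exists_maximal 𝒮
  have hMc : M.Countable := M.to_countable
  haveI := hMc.to_subtype
  have hpair : M.Pairwise (Function.onFun (AEDisjoint μ) G.cell) := maximal_pairwise G hfin hM𝒮 hMmax
  have hpair' : Pairwise (Function.onFun (AEDisjoint μ) fun s : M => G.cell s) := fun s t hne =>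
    hpair s.2 t.2 (Subtype.coe_injective.ne hne)
  have hsub : (⋃ s ∈ 𝒮, G.cell s) ⊆ ⋃ s ∈ M, G.cell s := by
    intro x hx
    obtain ⟨s, hs, hx⟩ := Set.mem_iUnion₂.mp hx
    obtain ⟨m, hm, hms⟩ := hMcover s hs
    exact Set.mem_iUnion₂.mpr ⟨m, hm, cell_suffix_subset G hms hx⟩
  calc μ (⋃ s ∈ 𝒮, G.cell s) ≤ μ (⋃ s ∈ M, G.cell s) := measure_mono hsub
    _ = ∑' s : M, μ (G.cell s) :=
        measure_biUnion₀ hMc hpair (fun s _ => (measurableSet_cell G s).nullMeasurableSet)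
    _ ≤ ∑' s : M, c * ∫⁻ x in G.cell s, F x ∂μ :=
        ENNReal.tsum_le_tsum fun s => hb s (hM𝒮 s.2)
    _ = c * ∑' s : M, ∫⁻ x in G.cell s, F x ∂μ := ENNReal.tsum_mul_left
    _ = c * ∫⁻ x in ⋃ s : M, G.cell s, F x ∂μ := by
        rw [lintegral_iUnion₀ (s := fun s : M => G.cell s) (fun s => (measurableSet_cell G s.1).nullMeasurableSet) hpair']
    _ ≤ c * ∫⁻ x in I, F x ∂μ := by
        refine mul_le_mul_right (lintegral_mono' (Measure.restrict_mono ?_ le_rfl) le_rfl) c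
        simp only [iUnion_subset_iff]
        exact fun s => cell_subset G s.1

open Classical in
def gchain (G : MuAdicGrid μ I) (x : ℝ) : ℕ → List Bool
  | 0 => []
  | n+1 => (if x ∈ G.cell (true :: gchain G x n) then true else false) :: gchain G x n

lemma gchain_length (G : MuAdicGrid μ I) (x : ℝ) : ∀ n, (gchain G x n).length = n := by
  intro n
  induction n with
  | zero => rfl
  | succ n ih => simp [gchain, ih]

lemma gchain_mem (G : MuAdicGrid μ I) {x : ℝ} (hx : x ∈ I) :
    ∀ n, x ∈ G.cell (gchain G x n) := by
  intro n
  induction n with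
  | zero => rw [gchain, G.top]; exact hx
  | succ n ih =>
    by_cases h : x ∈ G.cell (true :: gchain G x n)
    · simpa [gchain, h] using h
    · have h2 : x ∈ G.cell (false :: gchain G x n) := by
        have := (G.union (gchain G x n)).symm ▸ ih
        rcases this with h' | h'
        · exact absurd h' h
        · exact h'
      simpa [gchain, h] using h2

lemma gchain_suffix (G : MuAdicGrid μ I) (x : ℝ) (n : ℕ) :
    gchain G x n <:+ gchain G x (n+1) :=
  List.suffix_cons _ _

def gbranch (G : MuAdicGrid μ I) (x : ℝ) (n : ℕ) : Bool := (gchain G x (n+1)).headI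

lemma gchain_eq_ofFn (G : MuAdicGrid μ I) (x : ℝ) :
    ∀ n, gchain G x n = List.ofFn (fun i : Fin n => gbranch G x (n - 1 - i)) := by
  intro n
  induction n with
  | zero => rfl
  | succ n ih =>
    have hstep : gchain G x (n+1) = gbranch G x n :: gchain G x n := by
      rw [gbranch]
      conv_lhs => rw [gchain]
      rw [gchain]
      rfl
    rw [hstep, ih, List.ofFn_succ]
    refine congrArg₂ List.cons ?_ ?_
    · congr 1
    · refine congrArg List.ofFn ?_
      funext i
      congr 1
      simp only [Fin.val_succ]
      omega

end Helpers
open Filter in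
open scoped ENNReal in
/-- After removing the (μ-null) union of all limit sets of positive length of chains
of the grid, the grid differentiates `L¹`: `f ≤ Mᴰ f` μ-a.e. on the remaining set. -/
theorem grid_differentiation (μ : Measure ℝ) [NullSingletonClass μ] [IsLocallyFiniteMeasure μ]
    (I : Set ℝ) (hI : IsBInterval I) (hμI : μ I ≠ 0)
    (G : MuAdicGrid μ I)
    (E : Set ℝ)
    (hE : E = I \ ⋃ c ∈ {c : ℕ → Bool | ¬ (limitSet μ G c).Subsingleton}, limitSet μ G c)
    (f : ℝ → ℝ) (hf0 : ∀ x, 0 ≤ f x) (hfm : Measurable f) (hfi : IntegrableOn f I μ) :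
    μ E = μ I ∧ ∀ᵐ x ∂μ, x ∈ E → f x ≤ gridMaximal μ G f x := by
  obtain ⟨a₀, b₀, hab₀, hI'⟩ := hI
  have hIfin : μ I ≠ ⊤ := by rw [hI']; exact isCompact_Icc.measure_lt_top.ne
  have hEsub : E ⊆ I := hE ▸ diff_subset
  -- measures of cells tend to 0
  have htend0 : Tendsto (fun m : ℕ => μ I * 2⁻¹ ^ m) atTop (nhds 0) := by
    have := ENNReal.Tendsto.const_mul (a := μ I)
      (ENNReal.tendsto_pow_atTop_nhds_zero_of_lt_one (by norm_num : (2⁻¹ : ℝ≥0∞) < 1))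
      (Or.inr hIfin)
    simpa using this
  -- two points of a common limit set span a null interval
  have hlimnull : ∀ (c : ℕ → Bool), ∀ u v : ℝ, u ∈ limitSet μ G c → v ∈ limitSet μ G c →
      μ (Icc u v) = 0 := by
    intro c u v hu hv
    have key : ∀ m : ℕ, μ (Icc u v) ≤ μ I * 2⁻¹ ^ m := by
      intro m
      set s := List.ofFn fun i : Fin m => c (m - 1 - i) with hs
      obtain ⟨a, b, hab, hcell⟩ := G.isIcc s
      have hu' : u ∈ Icc a b := hcell ▸ (mem_iInter.mp hu m)
      have hv' : v ∈ Icc a b := hcell ▸ (mem_iInter.mp hv m)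
      calc μ (Icc u v) ≤ μ (G.cell s) := by
            rw [hcell]; exact measure_mono (Icc_subset_Icc hu'.1 hv'.2)
        _ = μ I * 2⁻¹ ^ s.length := measure_cell G s
        _ = μ I * 2⁻¹ ^ m := by rw [hs, List.length_ofFn]
    exact le_antisymm (ge_of_tendsto htend0 (Filter.Eventually.of_forall key)) (zero_le)
  -- Part 1 : μ E = μ I
  have hSq : ∀ q : ℝ, μ {x | x < q ∧ μ (Icc x q) = 0} = 0 := by
    intro q
    set S := {x | x < q ∧ μ (Icc x q) = 0} with hS
    set S' := ⋃ p ∈ {p : ℚ | μ (Icc (p : ℝ) q) = 0}, Icc (p : ℝ) q with hS'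
    have h1 : μ S' = 0 :=
      (measure_biUnion_null_iff (Set.to_countable _)).mpr fun p hp => hp
    have h2 : μ (S \ S') = 0 := by
      refine Set.Subsingleton.measure_zero ?_ μ
      intro x hx y hy
      by_contra hne
      rcases Ne.lt_or_gt hne with h | h
      · obtain ⟨p, hp1, hp2⟩ := exists_rat_btwn h
        have h0 : μ (Icc (p : ℝ) q) = 0 :=
          measure_mono_null (Icc_subset_Icc hp1.le le_rfl) hx.1.2
        exact hy.2 (Set.mem_biUnion h0 ⟨hp2.le, hy.1.1.le⟩)
      · obtain ⟨p, hp1, hp2⟩ := exists_rat_btwn h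
        have h0 : μ (Icc (p : ℝ) q) = 0 :=
          measure_mono_null (Icc_subset_Icc hp1.le le_rfl) hy.1.2
        exact hx.2 (Set.mem_biUnion h0 ⟨hp2.le, hx.1.1.le⟩)
    refine le_antisymm ?_ (zero_le)
    calc μ S ≤ μ (S' ∪ (S \ S')) := measure_mono (fun x hx => by
          by_cases h : x ∈ S'
          · exact Or.inl h
          · exact Or.inr ⟨hx, h⟩)
      _ ≤ μ S' + μ (S \ S') := measure_union_le _ _
      _ = 0 := by rw [h1, h2, add_zero]
  have hSp : ∀ p : ℝ, μ {x | p < x ∧ μ (Icc p x) = 0} = 0 := by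
    intro p
    set S := {x | p < x ∧ μ (Icc p x) = 0} with hS
    set S' := ⋃ r ∈ {r : ℚ | μ (Icc p (r : ℝ)) = 0}, Icc p (r : ℝ) with hS'
    have h1 : μ S' = 0 :=
      (measure_biUnion_null_iff (Set.to_countable _)).mpr fun r hr => hr
    have h2 : μ (S \ S') = 0 := by
      refine Set.Subsingleton.measure_zero ?_ μ
      intro x hx y hy
      by_contra hne
      rcases Ne.lt_or_gt hne with h | h
      · obtain ⟨r, hr1, hr2⟩ := exists_rat_btwn h
        have h0 : μ (Icc p (r : ℝ)) = 0 :=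
          measure_mono_null (Icc_subset_Icc le_rfl hr2.le) hy.1.2
        exact hx.2 (Set.mem_biUnion h0 ⟨hx.1.1.le, hr1.le⟩)
      · obtain ⟨r, hr1, hr2⟩ := exists_rat_btwn h
        have h0 : μ (Icc p (r : ℝ)) = 0 :=
          measure_mono_null (Icc_subset_Icc le_rfl hr2.le) hx.1.2
        exact hy.2 (Set.mem_biUnion h0 ⟨hy.1.1.le, hr1.le⟩)
    refine le_antisymm ?_ (zero_le)
    calc μ S ≤ μ (S' ∪ (S \ S')) := measure_mono (fun x hx => by
          by_cases h : x ∈ S'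
          · exact Or.inl h
          · exact Or.inr ⟨hx, h⟩)
      _ ≤ μ S' + μ (S \ S') := measure_union_le _ _
      _ = 0 := by rw [h1, h2, add_zero]
  have hU0 : μ (⋃ c ∈ {c : ℕ → Bool | ¬ (limitSet μ G c).Subsingleton}, limitSet μ G c) = 0 := by
    set N := ⋃ q : ℚ, {x : ℝ | x < (q : ℝ) ∧ μ (Icc x (q : ℝ)) = 0} with hNdef
    set N' := ⋃ p : ℚ, {x : ℝ | (p : ℝ) < x ∧ μ (Icc (p : ℝ) x) = 0} with hN'def
    have hN : μ N = 0 := measure_iUnion_null fun q => hSq (q : ℝ)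
    have hN' : μ N' = 0 := measure_iUnion_null fun p => hSp (p : ℝ)
    refine measure_mono_null ?_ (by rw [measure_union_null hN hN'] :  μ (N ∪ N') = 0)
    intro x hx
    obtain ⟨c, hc, hxc⟩ := Set.mem_iUnion₂.mp hx
    simp only [Set.mem_setOf_eq, Set.not_subsingleton_iff] at hc
    obtain ⟨u, hu, v, hv, huv⟩ := hc
    obtain ⟨y, hy, hyx⟩ : ∃ y, y ∈ limitSet μ G c ∧ y ≠ x := by
      by_cases h : u = x
      · exact ⟨v, hv, fun hvx => huv (by rw [h, hvx])⟩
      · exact ⟨u, hu, h⟩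
    rcases hyx.lt_or_gt with h | h
    · -- y < x
      obtain ⟨p, hp1, hp2⟩ := exists_rat_btwn h
      refine Or.inr (Set.mem_iUnion.mpr ⟨p, hp2, ?_⟩)
      exact measure_mono_null (Icc_subset_Icc hp1.le le_rfl) (hlimnull c y x hy hxc)
    · -- x < y
      obtain ⟨q, hq1, hq2⟩ := exists_rat_btwn h
      refine Or.inl (Set.mem_iUnion.mpr ⟨q, hq1, ?_⟩)
      exact measure_mono_null (Icc_subset_Icc le_rfl hq2.le) (hlimnull c x y hxc hy)
  have hEμ : μ E = μ I := by
    refine le_antisymm (measure_mono hEsub) ?_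
    calc μ I ≤ μ (E ∪ ⋃ c ∈ {c : ℕ → Bool | ¬ (limitSet μ G c).Subsingleton}, limitSet μ G c) := by
          refine measure_mono fun x hx => ?_
          by_cases h : x ∈ ⋃ c ∈ {c : ℕ → Bool | ¬ (limitSet μ G c).Subsingleton}, limitSet μ G c
          · exact Or.inr h
          · exact Or.inl (hE ▸ ⟨hx, h⟩)
      _ ≤ μ E + _ := measure_union_le _ _
      _ = μ E := by rw [hU0, add_zero]
  refine ⟨hEμ, ?_⟩
  -- PART 2
  classical
  have hfabs : (fun y => |f y|) = f := funext fun y => abs_of_nonneg (hf0 y)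
  set F : ℝ → ℝ≥0∞ := fun x => ENNReal.ofReal (f x) with hFdef
  have hFm : Measurable F := hfm.ennreal_ofReal
  have hlink : ∀ s : List Bool,
      ENNReal.ofReal (∫ x in G.cell s, f x ∂μ) = ∫⁻ x in G.cell s, F x ∂μ := fun s =>
    ofReal_integral_eq_lintegral_ofReal (hfi.mono_set (cell_subset G s)) (ae_of_all _ hf0)
  have hC : ∫⁻ x in I, F x ∂μ ≠ ⊤ := by
    have h1 : ∫⁻ x in I, F x ∂μ = ENNReal.ofReal (∫ x in I, f x ∂μ) :=
      (ofReal_integral_eq_lintegral_ofReal hfi (ae_of_all _ hf0)).symm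
    rw [h1]; exact ENNReal.ofReal_ne_top
  have hchain_uniq : ∀ x ∈ E, ∀ y, (∀ n, y ∈ G.cell (gchain G x n)) → y = x := by
    intro x hx y hy
    by_contra hne
    have hxL : x ∈ limitSet μ G (gbranch G x) := mem_iInter.mpr fun n => by
      rw [← gchain_eq_ofFn]; exact gchain_mem G (hEsub hx) n
    have hyL : y ∈ limitSet μ G (gbranch G x) := mem_iInter.mpr fun n => by
      rw [← gchain_eq_ofFn]; exact hy n
    have hns : ¬ (limitSet μ G (gbranch G x)).Subsingleton := fun h => hne (h hyL hxL)
    have hmem : x ∈ ⋃ c ∈ {c : ℕ → Bool | ¬ (limitSet μ G c).Subsingleton}, limitSet μ G c :=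
      Set.mem_biUnion hns hxL
    exact (hE ▸ hx).2 hmem
  have hshrink : ∀ x ∈ E, ∀ U : Set ℝ, IsOpen U → x ∈ U →
      ∃ n, G.cell (gchain G x n) ⊆ U := by
    intro x hx U hU hxU
    choose A B hAB hcell using fun n => G.isIcc (gchain G x n)
    have hxmem : ∀ n, x ∈ Icc (A n) (B n) := fun n =>
      (hcell n) ▸ gchain_mem G (hEsub hx) n
    have hmono : ∀ n, A n ≤ A (n+1) ∧ B (n+1) ≤ B n := fun n => by
      rw [← Set.Icc_subset_Icc_iff (hAB (n+1)), ← hcell n, ← hcell (n+1)]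
      exact cell_suffix_subset G (gchain_suffix G x n)
    have hBanti : Antitone B := antitone_nat_of_succ_le fun n => (hmono n).2
    have hAmono : Monotone A := monotone_nat_of_le_succ fun n => (hmono n).1
    have hBbd : BddBelow (Set.range B) := ⟨x, by rintro _ ⟨n, rfl⟩; exact (hxmem n).2⟩
    have hAbd : BddAbove (Set.range A) := ⟨x, by rintro _ ⟨n, rfl⟩; exact (hxmem n).1⟩
    have hBx : (⨅ n, B n) = x := by
      refine hchain_uniq x hx _ fun n => ?_
      rw [hcell n]
      exact ⟨le_trans (hxmem n).1 (le_ciInf fun m => (hxmem m).2), ciInf_le hBbd n⟩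
    have hAx : (⨆ n, A n) = x := by
      refine hchain_uniq x hx _ fun n => ?_
      rw [hcell n]
      exact ⟨le_ciSup hAbd n, le_trans (ciSup_le fun m => (hxmem m).1) (hxmem n).2⟩
    have htB : Tendsto B atTop (nhds x) := hBx ▸ tendsto_atTop_ciInf hBanti hBbd
    have htA : Tendsto A atTop (nhds x) := hAx ▸ tendsto_atTop_ciSup hAmono hAbd
    obtain ⟨ε, hε, hball⟩ := Metric.isOpen_iff.mp hU x hxU
    have hev := (htB.eventually_lt_const (by linarith : x < x + ε)).and
      (htA.eventually_const_lt (by linarith : x - ε < x))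
    obtain ⟨n, hn⟩ := hev.exists
    refine ⟨n, ?_⟩
    rw [hcell n]
    intro z hz
    apply hball
    rw [Metric.mem_ball, Real.dist_eq, abs_sub_lt_iff]
    constructor
    · linarith [hz.2, hn.1]
    · linarith [hz.1, hn.2]
  set Unb : Set ℝ := {x | ¬ BddAbove (Set.range
      (fun s : {s : List Bool // x ∈ G.cell s ∧ μ (G.cell s) ≠ 0} => iAvg μ f (G.cell s.1)))}
    with hUnbDef
  have hUnb : μ Unb = 0 := by
    have hbound : ∀ n : ℕ, μ Unb ≤ ENNReal.ofReal (1/((n:ℝ)+1)) * ∫⁻ x in I, F x ∂μ := by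
      intro n
      set 𝒮 : Set (List Bool) :=
        {s | μ (G.cell s) ≤ ENNReal.ofReal (1/((n:ℝ)+1)) * ∫⁻ x in G.cell s, F x ∂μ} with h𝒮
      have hsub : Unb ⊆ ⋃ s ∈ 𝒮, G.cell s := by
        intro x hx
        obtain ⟨y, ⟨⟨s, hxs, hμs⟩, rfl⟩, hy⟩ := (not_bddAbove_iff.mp hx) ((n : ℝ)+1)
        refine Set.mem_biUnion ?_ hxs
        have hτpos : 0 < (μ (G.cell s)).toReal :=
          ENNReal.toReal_pos hμs (measure_cell_ne_top G hIfin s)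
        have h2 : ((n : ℝ)+1) * (μ (G.cell s)).toReal < ∫ x in G.cell s, f x ∂μ := by
          simp only [iAvg] at hy
          rw [lt_inv_mul_iff₀ hτpos] at hy
          linarith [hy]
        show μ (G.cell s) ≤ _
        calc μ (G.cell s) = ENNReal.ofReal ((μ (G.cell s)).toReal) :=
              (ENNReal.ofReal_toReal (measure_cell_ne_top G hIfin s)).symm
          _ ≤ ENNReal.ofReal ((1/((n:ℝ)+1)) * ∫ x in G.cell s, f x ∂μ) := by
              refine ENNReal.ofReal_le_ofReal ?_
              rw [one_div]
              have hn1 : (0:ℝ) < (n:ℝ)+1 := by positivity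
              exact (le_inv_mul_iff₀ hn1).mpr h2.le
          _ = ENNReal.ofReal (1/((n:ℝ)+1)) * ENNReal.ofReal (∫ x in G.cell s, f x ∂μ) :=
              ENNReal.ofReal_mul (by positivity)
          _ = ENNReal.ofReal (1/((n:ℝ)+1)) * ∫⁻ x in G.cell s, F x ∂μ := by rw [hlink]
      refine (measure_mono hsub).trans ?_
      exact measure_biUnion_cell_le G hIfin F _ 𝒮 (fun s hs => hs)
    have ht : Tendsto (fun n : ℕ => ENNReal.ofReal (1/((n:ℝ)+1)) * ∫⁻ x in I, F x ∂μ)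
        atTop (nhds 0) := by
      have h1 : Tendsto (fun n : ℕ => ENNReal.ofReal (1/((n:ℝ)+1))) atTop
          (nhds 0) := by
        rw [← ENNReal.ofReal_zero]
        exact ENNReal.tendsto_ofReal tendsto_one_div_add_atTop_nhds_zero_nat
      simpa using ENNReal.Tendsto.mul_const h1 (Or.inr hC)
    exact le_antisymm (ge_of_tendsto ht (Filter.Eventually.of_forall hbound)) (zero_le)
  have hBad : ∀ T' T : ℝ, T' < T →
      μ {x | x ∈ E ∧ (∀ s : List Bool, x ∈ G.cell s → μ (G.cell s) ≠ 0 →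
          iAvg μ f (G.cell s) < T') ∧ T < f x} = 0 := by
    intro T' T hTT
    set Bad := {x | x ∈ E ∧ (∀ s : List Bool, x ∈ G.cell s → μ (G.cell s) ≠ 0 →
        iAvg μ f (G.cell s) < T') ∧ T < f x} with hBadDef
    by_cases hT'pos : 0 < T'
    swap
    · push_neg at hT'pos
      have hempty : Bad = ∅ := by
        rw [Set.eq_empty_iff_forall_notMem]
        intro x hx
        have h1 : iAvg μ f (G.cell []) < T' := hx.2.1 []
          (by rw [G.top]; exact hEsub hx.1) (by rw [G.top]; exact hμI)
        have h2 : 0 ≤ iAvg μ f (G.cell []) :=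
          mul_nonneg (inv_nonneg.mpr ENNReal.toReal_nonneg) (integral_nonneg hf0)
        linarith
      rw [hempty]; exact measure_empty
    · have hBadsub : Bad ⊆ I := fun x hx => hEsub hx.1
      have hBadfin : μ Bad ≠ ⊤ := ((measure_mono hBadsub).trans_lt hIfin.lt_top).ne
      have key : ∀ ε : ℝ≥0∞, ε ≠ 0 →
          ENNReal.ofReal T * μ Bad ≤ ENNReal.ofReal T' * (μ Bad + ε) := by
        intro ε hε
        obtain ⟨U, hBU, hUopen, hUμ⟩ := Set.exists_isOpen_lt_of_lt Bad (μ Bad + ε)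
          (ENNReal.lt_add_right hBadfin hε)
        set 𝒮 : Set (List Bool) := {s | G.cell s ⊆ U ∧
          ∫⁻ x in G.cell s, F x ∂μ ≤ ENNReal.ofReal T' * μ (G.cell s)} with h𝒮
        have hcover : Bad ⊆ ⋃ s ∈ 𝒮, G.cell s := by
          intro x hx
          obtain ⟨n, hn⟩ := hshrink x hx.1 U hUopen (hBU hx)
          refine Set.mem_biUnion (show _ ∈ 𝒮 from ⟨hn, ?_⟩) (gchain_mem G (hEsub hx.1) n)
          by_cases h0 : μ (G.cell (gchain G x n)) = 0
          · rw [Measure.restrict_eq_zero.mpr h0, lintegral_zero_measure]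
            exact zero_le
          · have havg := hx.2.1 _ (gchain_mem G (hEsub hx.1) n) h0
            have hτpos : 0 < (μ (G.cell (gchain G x n))).toReal :=
              ENNReal.toReal_pos h0 (measure_cell_ne_top G hIfin _)
            rw [← hlink]
            have h2 : ∫ y in G.cell (gchain G x n), f y ∂μ ≤
                T' * (μ (G.cell (gchain G x n))).toReal := by
              simp only [iAvg] at havg
              rw [inv_mul_lt_iff₀ hτpos] at havg
              calc ∫ y in G.cell (gchain G x n), f y ∂μ
                  ≤ (μ (G.cell (gchain G x n))).toReal * T' := havg.le
                _ = T' * (μ (G.cell (gchain G x n))).toReal := mul_comm _ _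
            calc ENNReal.ofReal (∫ y in G.cell (gchain G x n), f y ∂μ)
                ≤ ENNReal.ofReal (T' * (μ (G.cell (gchain G x n))).toReal) :=
                  ENNReal.ofReal_le_ofReal h2
              _ = ENNReal.ofReal T' * ENNReal.ofReal ((μ (G.cell (gchain G x n))).toReal) :=
                  ENNReal.ofReal_mul hT'pos.le
              _ = ENNReal.ofReal T' * μ (G.cell (gchain G x n)) := by
                  rw [ENNReal.ofReal_toReal (measure_cell_ne_top G hIfin _)]
        have hlow : ENNReal.ofReal T * μ Bad ≤ ∫⁻ x in Bad, F x ∂μ := by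
          have hms : MeasurableSet {x : ℝ | F x < ENNReal.ofReal T} := hFm measurableSet_Iio
          have hae : ∀ᵐ x ∂(μ.restrict Bad), ENNReal.ofReal T ≤ F x := by
            rw [ae_iff]
            have hset : {x | ¬ ENNReal.ofReal T ≤ F x} = {x : ℝ | F x < ENNReal.ofReal T} := by
              ext x; simp [not_le]
            rw [hset, Measure.restrict_apply hms]
            convert measure_empty (μ := μ)
            rw [Set.eq_empty_iff_forall_notMem]
            rintro x ⟨hltx, hxB⟩
            exact absurd (ENNReal.ofReal_le_ofReal hxB.2.2.le : ENNReal.ofReal T ≤ F x)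
              (not_le.mpr hltx)
          calc ENNReal.ofReal T * μ Bad = ∫⁻ _ in Bad, ENNReal.ofReal T ∂μ :=
                (setLIntegral_const _ _).symm
            _ ≤ ∫⁻ x in Bad, F x ∂μ := lintegral_mono_ae hae
        calc ENNReal.ofReal T * μ Bad ≤ ∫⁻ x in Bad, F x ∂μ := hlow
          _ ≤ ∫⁻ x in ⋃ s ∈ 𝒮, G.cell s, F x ∂μ :=
              lintegral_mono' (Measure.restrict_mono hcover le_rfl) le_rfl
          _ ≤ ENNReal.ofReal T' * μ U :=
              lintegral_biUnion_cell_le G hIfin F _ 𝒮 (fun s hs => hs.2) U (fun s hs => hs.1)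
          _ ≤ ENNReal.ofReal T' * (μ Bad + ε) := mul_le_mul_right hUμ.le _
      have h2 : ENNReal.ofReal T * μ Bad ≤ ENNReal.ofReal T' * μ Bad := by
        refine ENNReal.le_of_forall_pos_le_add fun δ hδ hfin2 => ?_
        have hT'0 : ENNReal.ofReal T' ≠ 0 := by
          simp only [ne_eq, ENNReal.ofReal_eq_zero, not_le]; exact hT'pos
        have hδ1 : ((δ : ℝ≥0∞) / ENNReal.ofReal T') ≠ 0 :=
          (ENNReal.div_pos (by exact_mod_cast hδ.ne') ENNReal.ofReal_ne_top).ne'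
        calc ENNReal.ofReal T * μ Bad
            ≤ ENNReal.ofReal T' * (μ Bad + (δ : ℝ≥0∞) / ENNReal.ofReal T') := key _ hδ1
          _ = ENNReal.ofReal T' * μ Bad + ENNReal.ofReal T' * ((δ : ℝ≥0∞) / ENNReal.ofReal T') := by
              rw [mul_add]
          _ = ENNReal.ofReal T' * μ Bad + (δ : ℝ≥0∞) := by
              rw [ENNReal.mul_div_cancel hT'0 ENNReal.ofReal_ne_top]
      have hsplit : ENNReal.ofReal T = ENNReal.ofReal T' + ENNReal.ofReal (T - T') := by
        rw [← ENNReal.ofReal_add hT'pos.le (by linarith)]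
        congr 1; ring
      rw [hsplit, add_mul] at h2
      have hfin2 : ENNReal.ofReal T' * μ Bad ≠ ⊤ :=
        ENNReal.mul_ne_top ENNReal.ofReal_ne_top hBadfin
      have h3 : ENNReal.ofReal (T - T') * μ Bad = 0 := by
        have h4 : ENNReal.ofReal T' * μ Bad + ENNReal.ofReal (T - T') * μ Bad ≤
            ENNReal.ofReal T' * μ Bad + 0 := by rw [add_zero]; exact h2
        exact le_antisymm ((ENNReal.add_le_add_iff_left hfin2).mp h4) (zero_le)
      rcases mul_eq_zero.mp h3 with h | h
      · refine absurd h ?_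
        simp only [ne_eq, ENNReal.ofReal_eq_zero, not_le]
        linarith
      · exact h
  set BadU := Unb ∪ ⋃ p : {p : ℚ × ℚ // (p.1 : ℝ) < (p.2 : ℝ)},
      {x | x ∈ E ∧ (∀ s : List Bool, x ∈ G.cell s → μ (G.cell s) ≠ 0 →
          iAvg μ f (G.cell s) < ((p.1.1 : ℝ))) ∧ ((p.1.2 : ℝ)) < f x} with hBadUdef
  have hBadU : μ BadU = 0 := by
    rw [hBadUdef]
    exact measure_union_null hUnb (measure_iUnion_null fun p => hBad _ _ p.2)
  rw [ae_iff]
  refine measure_mono_null ?_ hBadU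
  intro x hx
  simp only [Set.mem_setOf_eq, _root_.not_imp, not_le] at hx
  obtain ⟨hxE, hlt⟩ := hx
  by_cases hb : BddAbove (Set.range
      (fun s : {s : List Bool // x ∈ G.cell s ∧ μ (G.cell s) ≠ 0} => iAvg μ f (G.cell s.1)))
  · right
    have hM : gridMaximal μ G f x = ⨆ s : {s : List Bool // x ∈ G.cell s ∧ μ (G.cell s) ≠ 0},
        iAvg μ f (G.cell s.1) := by
      simp only [gridMaximal, hfabs]
    obtain ⟨q1, hq1, hq1'⟩ := exists_rat_btwn hlt
    obtain ⟨q2, hq2, hq2'⟩ := exists_rat_btwn hq1'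
    refine Set.mem_iUnion.mpr ⟨⟨(q1, q2), by exact_mod_cast hq2⟩, hxE, ?_, hq2'⟩
    intro s hxs hμs
    refine lt_of_le_of_lt ?_ hq1
    calc iAvg μ f (G.cell s)
        ≤ ⨆ t : {s : List Bool // x ∈ G.cell s ∧ μ (G.cell s) ≠ 0}, iAvg μ f (G.cell t.1) :=
          le_ciSup hb ⟨s, hxs, hμs⟩
      _ = gridMaximal μ G f x := hM.symm
  · exact Or.inl hb
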